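/- Let d ≥ 1, m ≥ d, and let [L,B] be a compact real interval (the full design region). Let M : [L,B] → Sym⁺(d) be continuously differentiable, let Ψ₀ ≡ 1 and Ψ₁, …, Ψ_{2m−2} : [L,B] → ℝ be continuously differentiable with {Ψ₀, …, Ψ_{2m−2}} and {Ψ₁′, …, Ψ_{2m−2}′} Chebyshev systems on [L,B], and assume the complete-class property on [L,B]: for every design ξ on [L,B] there exists a design ξ̃ with at most m design points, one of which is L, with ∫Ψ_ℓ dξ̃ = ∫Ψ_ℓ dξ for ℓ = 0,…,2m−2 and M_{ξ̃} ≥ M_ξ in the Loewner order. Let Φ be an optimality criterion, let ξ** be the unique design maximizing Φ(M_ξ) over all designs on [L,B], assume ξ** has exactly m support points, and let x_max** be its largest support point. Let U ∈ (L,B] and assume the design maximizing Φ(M_ξ) over all designs on [L,U] is unique with exactly m support points. Then: if U < x_max**, the Φ-optimal design on [L,U] has both L and U among its support points; and if U ≥ x_max**, the Φ-optimal design on [L,U] is ξ**. -/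

import Mathlib

attribute [local instance] Matrix.normedAddCommGroup Matrix.normedSpace

structure Design (I : Set ℝ) where
  pts : Finset ℝ
  w : ℝ → ℝ
  mem_pts : ∀ x ∈ pts, x ∈ I
  w_nonneg : ∀ x ∈ pts, 0 ≤ w x
  w_sum : ∑ x ∈ pts, w x = 1

noncomputable def Design.supp {I : Set ℝ} (ξ : Design I) : Finset ℝ :=
  ξ.pts.filter (fun x => 0 < ξ.w x)

noncomputable def infoMat {d : ℕ} (M : ℝ → Matrix (Fin d) (Fin d) ℝ) {I : Set ℝ}
    (ξ : Design I) : Matrix (Fin d) (Fin d) ℝ :=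
  ∑ x ∈ ξ.pts, ξ.w x • M x

def IsChebyshev {n : ℕ} (g : Fin n → ℝ → ℝ) (T : Set ℝ) : Prop :=
  ∀ t : Fin n → ℝ, StrictMono t → (∀ i, t i ∈ T) →
    (Matrix.of fun i j => g j (t i)).det ≠ 0

structure IsOptCriterion {d : ℕ} (Φ : Matrix (Fin d) (Fin d) ℝ → ℝ) : Prop where
  nonneg : ∀ A : Matrix (Fin d) (Fin d) ℝ, A.PosSemidef → 0 ≤ Φ A
  nonconst : ∃ A B : Matrix (Fin d) (Fin d) ℝ, A.PosSemidef ∧ B.PosSemidef ∧ Φ A ≠ Φ B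
  concave : ∀ A B : Matrix (Fin d) (Fin d) ℝ, A.PosSemidef → B.PosSemidef →
    ∀ α : ℝ, 0 < α → α < 1 → α * Φ A + (1 - α) * Φ B ≤ Φ (α • A + (1 - α) • B)
  isotonic : ∀ A B : Matrix (Fin d) (Fin d) ℝ, B.PosSemidef → (A - B).PosSemidef →
    Φ B ≤ Φ A
  smooth : ContDiffOn ℝ 1 Φ {A : Matrix (Fin d) (Fin d) ℝ | A.PosDef}

noncomputable def infoOf {d : ℕ} (m : ℕ) (M : ℝ → Matrix (Fin d) (Fin d) ℝ) (L : ℝ)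
    (x w : Fin (m - 1) → ℝ) : Matrix (Fin d) (Fin d) ℝ :=
  (1 - ∑ i, w i) • M L + ∑ i, w i • M (x i)

/-- Two (finitely supported) designs coincide as discrete measures. -/
def sameMeasure {I J : Set ℝ} (ξ : Design I) (η : Design J) : Prop :=
  ∀ g : ℝ → ℝ, ∑ y ∈ ξ.pts, ξ.w y * g y = ∑ y ∈ η.pts, η.w y * g y

/-! ### Auxiliary machinery -/

namespace Stmt7Aux

open Finset Set Filter Matrix

/-- mass of a design at a point -/
noncomputable def massOf {I : Set ℝ} (ξ : Design I) (x : ℝ) : ℝ :=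
  if x ∈ ξ.pts then ξ.w x else 0

lemma massOf_nonneg {I : Set ℝ} (ξ : Design I) (x : ℝ) : 0 ≤ massOf ξ x := by
  unfold massOf; split
  · exact ξ.w_nonneg x ‹_›
  · exact le_rfl

lemma mem_supp_iff {I : Set ℝ} (ξ : Design I) (x : ℝ) :
    x ∈ ξ.supp ↔ x ∈ ξ.pts ∧ 0 < ξ.w x := Finset.mem_filter

lemma supp_subset_pts {I : Set ℝ} (ξ : Design I) : ξ.supp ⊆ ξ.pts := Finset.filter_subset _ _

lemma w_eq_zero_of_not_supp {I : Set ℝ} (ξ : Design I) {x : ℝ} (hx : x ∈ ξ.pts)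
    (h : x ∉ ξ.supp) : ξ.w x = 0 := by
  by_contra h0
  exact h ((mem_supp_iff ξ x).2 ⟨hx, lt_of_le_of_ne (ξ.w_nonneg x hx) (Ne.symm h0)⟩)

lemma massOf_pos_iff {I : Set ℝ} (ξ : Design I) (x : ℝ) :
    0 < massOf ξ x ↔ x ∈ ξ.supp := by
  unfold massOf
  constructor
  · intro h
    split at h
    · exact (mem_supp_iff ξ x).2 ⟨‹_›, h⟩
    · exact absurd h (lt_irrefl 0)
  · intro h
    rcases (mem_supp_iff ξ x).1 h with ⟨h1, h2⟩
    simpa [h1] using h2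

lemma massOf_eq_of_supp {I : Set ℝ} (ξ : Design I) {x : ℝ} (h : x ∈ ξ.supp) :
    massOf ξ x = ξ.w x := by
  unfold massOf; simp [supp_subset_pts ξ h]

lemma massOf_eq_zero {I : Set ℝ} (ξ : Design I) {x : ℝ} (h : x ∉ ξ.supp) :
    massOf ξ x = 0 := by
  unfold massOf
  split
  · exact w_eq_zero_of_not_supp ξ ‹_› h
  · rfl

lemma sum_massOf_smul {I : Set ℝ} (ξ : Design I) {T : Finset ℝ} (hT : ξ.supp ⊆ T)
    {E : Type*} [AddCommMonoid E] [Module ℝ E] (F : ℝ → E) :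
    ∑ x ∈ T, massOf ξ x • F x = ∑ y ∈ ξ.pts, ξ.w y • F y := by
  have h1 : ∑ x ∈ ξ.supp, massOf ξ x • F x = ∑ x ∈ T, massOf ξ x • F x := by
    apply Finset.sum_subset hT
    intro x _ hx
    rw [massOf_eq_zero ξ hx, zero_smul]
  have h2 : ∑ x ∈ ξ.supp, ξ.w x • F x = ∑ y ∈ ξ.pts, ξ.w y • F y := by
    apply Finset.sum_subset (supp_subset_pts ξ)
    intro x hx hx'
    rw [w_eq_zero_of_not_supp ξ hx hx', zero_smul]
  rw [← h1, ← h2]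
  exact Finset.sum_congr rfl fun x hx => by rw [massOf_eq_of_supp ξ hx]

lemma sum_massOf_mul {I : Set ℝ} (ξ : Design I) {T : Finset ℝ} (hT : ξ.supp ⊆ T) (g : ℝ → ℝ) :
    ∑ x ∈ T, massOf ξ x * g x = ∑ y ∈ ξ.pts, ξ.w y * g y := by
  simpa [smul_eq_mul] using sum_massOf_smul ξ hT (E := ℝ) g

lemma sum_supp_mul {I : Set ℝ} (ξ : Design I) (g : ℝ → ℝ) :
    ∑ x ∈ ξ.supp, ξ.w x * g x = ∑ y ∈ ξ.pts, ξ.w y * g y := by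
  rw [← sum_massOf_mul ξ (le_refl ξ.supp) g]
  exact Finset.sum_congr rfl fun x hx => by rw [massOf_eq_of_supp ξ hx]

lemma sum_massOf {I : Set ℝ} (ξ : Design I) {T : Finset ℝ} (hT : ξ.supp ⊆ T) :
    ∑ x ∈ T, massOf ξ x = 1 := by
  have := sum_massOf_mul ξ hT (fun _ => 1)
  simpa [ξ.w_sum] using this

lemma sameMeasure_massOf {I J : Set ℝ} {ξ : Design I} {η : Design J}
    (h : sameMeasure ξ η) (x : ℝ) : massOf ξ x = massOf η x := by
  have := h (fun y => if y = x then 1 else 0)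
  have l1 : ∀ {K : Set ℝ} (ζ : Design K),
      ∑ y ∈ ζ.pts, ζ.w y * (if y = x then 1 else 0) = massOf ζ x := by
    intro K ζ
    unfold massOf
    rw [Finset.sum_congr rfl (fun y _ => by rw [mul_ite, mul_one, mul_zero])]
    exact Finset.sum_ite_eq' ζ.pts x ζ.w
  rw [l1 ξ, l1 η] at this
  exact this

/-- restriction of a design to its support, viewed in a new region -/
noncomputable def restrictTo {I : Set ℝ} (ξ : Design I) (J : Set ℝ)
    (h : ∀ x ∈ ξ.supp, x ∈ J) : Design J where
  pts := ξ.supp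
  w := ξ.w
  mem_pts := h
  w_nonneg := fun x hx => ξ.w_nonneg x (supp_subset_pts ξ hx)
  w_sum := by
    have := sum_supp_mul ξ (fun _ => 1)
    simpa [ξ.w_sum] using this

lemma restrictTo_infoMat {I : Set ℝ} (ξ : Design I) (J : Set ℝ) (h : ∀ x ∈ ξ.supp, x ∈ J)
    {d : ℕ} (M : ℝ → Matrix (Fin d) (Fin d) ℝ) :
    infoMat M (restrictTo ξ J h) = infoMat M ξ := by
  unfold infoMat restrictTo
  rw [← sum_massOf_smul ξ (le_refl ξ.supp) M]
  exact Finset.sum_congr rfl fun x hx => by rw [massOf_eq_of_supp ξ hx]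

lemma restrictTo_sameMeasure {I : Set ℝ} (ξ : Design I) (J : Set ℝ)
    (h : ∀ x ∈ ξ.supp, x ∈ J) : sameMeasure (restrictTo ξ J h) ξ := by
  intro g
  exact sum_supp_mul ξ g

lemma posSemidef_smul {d : ℕ} {A : Matrix (Fin d) (Fin d) ℝ} (hA : A.PosSemidef)
    {c : ℝ} (hc : 0 ≤ c) : (c • A).PosSemidef := by
  constructor
  · show (c • A)ᴴ = c • A
    rw [Matrix.conjTranspose_smul, hA.1.eq]
    norm_num
  · intro x
    have := hA.2 x
    exact (hA.smul hc).2 x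

lemma infoMat_posSemidef {I : Set ℝ} (ξ : Design I) {d : ℕ}
    (M : ℝ → Matrix (Fin d) (Fin d) ℝ) (hM : ∀ x ∈ I, (M x).PosSemidef) :
    (infoMat M ξ).PosSemidef := by
  unfold infoMat
  apply Finset.sum_induction (fun x => ξ.w x • M x) (fun A => A.PosSemidef)
    (fun A B hA hB => hA.add hB) Matrix.PosSemidef.zero
  intro x hx
  exact posSemidef_smul (hM x (ξ.mem_pts x hx)) (ξ.w_nonneg x hx)

/-! #### Chebyshev systems -/

lemma exists_finset_superset {s : Set ℝ} (hs : s.Infinite) :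
    ∀ (n : ℕ) (S : Finset ℝ), ↑S ⊆ s → S.card ≤ n →
    ∃ T : Finset ℝ, S ⊆ T ∧ ↑T ⊆ s ∧ T.card = n := by
  intro n
  induction n with
  | zero =>
    intro S hS hc
    refine ⟨S, le_refl _, hS, le_antisymm hc (Nat.zero_le _)⟩
  | succ k ih =>
    intro S hS hc
    rcases eq_or_lt_of_le hc with h | h
    · exact ⟨S, le_refl _, hS, h⟩
    · obtain ⟨T, hST, hTs, hTc⟩ := ih S hS (Nat.lt_succ_iff.1 h)
      have : (s \ ↑T).Nonempty := Set.Infinite.nonempty (hs.diff (T.finite_toSet))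
      obtain ⟨y, hy⟩ := this
      refine ⟨insert y T, hST.trans (Finset.subset_insert y T), ?_, ?_⟩
      · intro z hz
        rcases Finset.mem_insert.1 (by exact_mod_cast hz) with rfl | hz'
        · exact hy.1
        · exact hTs hz'
      · rw [Finset.card_insert_of_notMem (fun hyT => hy.2 hyT), hTc]

lemma vecMul_zero {n : ℕ} {N : Matrix (Fin n) (Fin n) ℝ} (hN : N.det ≠ 0)
    {v : Fin n → ℝ} (hv : ∀ j, ∑ i, v i * N i j = 0) : v = 0 := by
  have hu : IsUnit N.det := isUnit_iff_ne_zero.2 hN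
  have h1 : Matrix.vecMul v N = 0 := by
    funext j
    simpa [Matrix.vecMul, dotProduct] using hv j
  have := congrArg (fun w => Matrix.vecMul w N⁻¹) h1
  simpa [Matrix.vecMul_vecMul, Matrix.mul_nonsing_inv N hu] using this

/-- If `S` has at most `n` points inside `[L,B]` and `δ` has vanishing moments
against a Chebyshev system of `n` functions, then `δ` vanishes on `S`. -/
lemma cheb_indep {n : ℕ} {L B : ℝ} (hLB : L < B) (g : Fin n → ℝ → ℝ)
    (hCheb : IsChebyshev g (Set.Icc L B)) (S : Finset ℝ) (hS : ↑S ⊆ Set.Icc L B)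
    (hcard : S.card ≤ n) (δ : ℝ → ℝ) (hm : ∀ ℓ, ∑ x ∈ S, δ x * g ℓ x = 0) :
    ∀ x ∈ S, δ x = 0 := by
  have hinf : (Set.Icc L B).Infinite := Set.infinite_coe_iff.1 (Set.Icc.infinite hLB)
  obtain ⟨T, hST, hTs, hTc⟩ := exists_finset_superset hinf n S hS hcard
  set e := T.orderIsoOfFin hTc with he
  set t : Fin n → ℝ := fun i => (e i : ℝ) with ht
  have htmono : StrictMono t := fun i j hij => by
    exact_mod_cast (e.lt_iff_lt.2 hij)
  have htI : ∀ i, t i ∈ Set.Icc L B := fun i => hTs (e i).2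
  have hdet := hCheb t htmono htI
  set δ' : ℝ → ℝ := fun x => if x ∈ S then δ x else 0 with hδ'
  have hm' : ∀ ℓ, ∑ x ∈ T, δ' x * g ℓ x = 0 := by
    intro ℓ
    rw [← hm ℓ]
    rw [← Finset.sum_subset hST (fun x _ hx => by simp [hδ', hx])]
    exact Finset.sum_congr rfl fun x hx => by simp [hδ', hx]
  have hsum : ∀ ℓ, ∑ i : Fin n, δ' (t i) * g ℓ (t i) = 0 := by
    intro ℓ
    rw [← hm' ℓ]
    rw [← Finset.sum_coe_sort T (fun x => δ' x * g ℓ x)]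
    exact Fintype.sum_equiv e.toEquiv _ _ (fun i => rfl)
  have hv : (fun i => δ' (t i)) = 0 :=
    vecMul_zero hdet (v := fun i => δ' (t i)) (fun j => hsum j)
  intro x hx
  obtain ⟨i, hi⟩ := e.surjective ⟨x, hST hx⟩
  have : δ' (t i) = 0 := congrFun hv i
  rw [ht] at this
  simp only [hi] at this
  simpa [hδ', hx] using this

/-- dets of a Chebyshev system at two increasing tuples have the same sign -/
lemma cheb_det_sign {n : ℕ} {L B : ℝ} (g : Fin n → ℝ → ℝ)
    (hg : ∀ ℓ, ContinuousOn (g ℓ) (Set.Icc L B)) (hCheb : IsChebyshev g (Set.Icc L B))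
    (a b : Fin n → ℝ) (ha : StrictMono a) (hb : StrictMono b)
    (haI : ∀ i, a i ∈ Set.Icc L B) (hbI : ∀ i, b i ∈ Set.Icc L B) :
    0 < (Matrix.of fun i j => g j (a i)).det * (Matrix.of fun i j => g j (b i)).det := by
  set c : ℝ → Fin n → ℝ := fun s i => (1 - s) * a i + s * b i with hc
  have hmem : ∀ s ∈ Set.Icc (0:ℝ) 1, ∀ i, c s i ∈ Set.Icc L B := by
    intro s hs i
    rcases haI i with ⟨h1, h2⟩
    rcases hbI i with ⟨h3, h4⟩
    rcases hs with ⟨h5, h6⟩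
    have e1 : (1-s)*L ≤ (1-s)*a i := mul_le_mul_of_nonneg_left h1 (by linarith)
    have e2 : s*L ≤ s*b i := mul_le_mul_of_nonneg_left h3 h5
    have e3 : (1-s)*a i ≤ (1-s)*B := mul_le_mul_of_nonneg_left h2 (by linarith)
    have e4 : s*b i ≤ s*B := mul_le_mul_of_nonneg_left h4 h5
    constructor
    · show L ≤ (1 - s) * a i + s * b i
      nlinarith
    · show (1 - s) * a i + s * b i ≤ B
      nlinarith
  have hmono : ∀ s ∈ Set.Icc (0:ℝ) 1, StrictMono (c s) := by
    intro s hs i j hij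
    have h1 := ha hij
    have h2 := hb hij
    rcases hs with ⟨h5, h6⟩
    show (1 - s) * a i + s * b i < (1 - s) * a j + s * b j
    rcases eq_or_lt_of_le h5 with h|h
    · rw [← h]; simpa using h1
    · have e1 : s*(b i) < s*(b j) := mul_lt_mul_of_pos_left h2 h
      have e2 : (1-s)*(a i) ≤ (1-s)*(a j) := mul_le_mul_of_nonneg_left h1.le (by linarith)
      linarith
  set f : ℝ → ℝ := fun s => (Matrix.of fun i j => g j (c s i)).det with hf
  have hfc : ContinuousOn f (Set.Icc (0:ℝ) 1) := by
    have hmat : ContinuousOn (fun s => (Matrix.of fun i j => g j (c s i))) (Set.Icc (0:ℝ) 1) := by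
      refine continuousOn_pi.2 ?_
      intro i
      rw [continuousOn_pi]
      intro j
      show ContinuousOn (fun s => g j (c s i)) (Set.Icc (0:ℝ) 1)
      apply ContinuousOn.comp (hg j)
      · exact ((continuous_const.sub continuous_id).mul continuous_const).add
          (continuous_id.mul continuous_const) |>.continuousOn
      · intro s hs; exact hmem s hs i
    exact continuous_id.matrix_det.comp_continuousOn hmat
  have hfne : ∀ s ∈ Set.Icc (0:ℝ) 1, f s ≠ 0 := fun s hs =>
    hCheb (c s) (hmono s hs) (hmem s hs)
  have hf0 : f 0 = (Matrix.of fun i j => g j (a i)).det := by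
    simp [hf, hc]
  have hf1 : f 1 = (Matrix.of fun i j => g j (b i)).det := by
    simp [hf, hc]
  rcases lt_trichotomy (f 0 * f 1) 0 with h | h | h
  · exfalso
    rcases mul_neg_iff.1 h with ⟨hp, hn⟩ | ⟨hn, hp⟩
    · obtain ⟨s, hs, hfs⟩ := intermediate_value_Icc' (by norm_num : (0:ℝ) ≤ 1) hfc
        ⟨le_of_lt hn, le_of_lt hp⟩
      exact hfne s hs hfs
    · obtain ⟨s, hs, hfs⟩ := intermediate_value_Icc (by norm_num : (0:ℝ) ≤ 1) hfc
        ⟨le_of_lt hn, le_of_lt hp⟩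
      exact hfne s hs hfs
  · exfalso
    rcases mul_eq_zero.1 h with h | h
    · exact hfne 0 (by norm_num) h
    · exact hfne 1 (by norm_num) h
  · rw [← hf0, ← hf1]; exact h

/-- endpoint signs of a kernel vector of a Chebyshev matrix are opposite -/
lemma cheb_last_neg {n : ℕ} {L B : ℝ} (hn : Odd n) (g : Fin n → ℝ → ℝ)
    (hg : ∀ ℓ, ContinuousOn (g ℓ) (Set.Icc L B)) (hCheb : IsChebyshev g (Set.Icc L B))
    (χ : Fin (n+1) → ℝ) (hχ : StrictMono χ) (hχI : ∀ j, χ j ∈ Set.Icc L B)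
    (c : Fin (n+1) → ℝ) (hker : ∀ ℓ, ∑ j, c j * g ℓ (χ j) = 0)
    (hc0 : 0 < c 0) : c (Fin.last n) < 0 := by
  set D : Fin (n+1) → ℝ :=
    fun j => (Matrix.of fun i k => g k (χ (j.succAbove i))).det with hD
  have hDne : ∀ j, D j ≠ 0 := by
    intro j
    exact hCheb (χ ∘ j.succAbove) (hχ.comp (Fin.strictMono_succAbove j))
      (fun i => hχI _)
  set dd : Fin (n+1) → ℝ := fun j => (-1)^(j:ℕ) * D j with hdd
  have hkd : ∀ ℓ, ∑ j, dd j * g ℓ (χ j) = 0 := by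
    intro ℓ
    set A : Matrix (Fin (n+1)) (Fin (n+1)) ℝ :=
      Matrix.of fun r k => Fin.cases (g ℓ (χ k)) (fun i => g i (χ k)) r with hA
    have hdet0 : A.det = 0 := by
      apply Matrix.det_zero_of_row_eq (i := 0) (j := ℓ.succ) (Fin.succ_ne_zero ℓ).symm
      funext k
      simp [hA]
    have hexp := Matrix.det_succ_row_zero A
    have hsub : ∀ j : Fin (n+1), (A.submatrix Fin.succ j.succAbove).det = D j := by
      intro j
      have : A.submatrix Fin.succ j.succAbove =
          (Matrix.of fun i k => g k (χ (j.succAbove i)))ᵀ := by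
        ext i i'
        simp [hA, Matrix.submatrix, Matrix.transpose]
      rw [this, Matrix.det_transpose]
    rw [hdet0] at hexp
    have : ∑ j, dd j * g ℓ (χ j) =
        ∑ j : Fin (n+1), (-1)^(j:ℕ) * A 0 j * (A.submatrix Fin.succ j.succAbove).det := by
      apply Finset.sum_congr rfl
      intro j _
      rw [hsub j]
      have hA0 : A 0 j = g ℓ (χ j) := by simp [hA]
      rw [hA0, hdd]
      ring
    rw [this, ← hexp]
  have hrep : ∀ j, c j = (c 0 / dd 0) * dd j := by
    have hd0 : dd 0 ≠ 0 := by
      simpa [hdd] using hDne 0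
    set e : Fin (n+1) → ℝ := fun j => c j - (c 0 / dd 0) * dd j with he
    have heker : ∀ ℓ, ∑ j, e j * g ℓ (χ j) = 0 := by
      intro ℓ
      have : ∑ j, e j * g ℓ (χ j)
          = ∑ j, c j * g ℓ (χ j) - (c 0 / dd 0) * ∑ j, dd j * g ℓ (χ j) := by
        rw [Finset.mul_sum, ← Finset.sum_sub_distrib]
        apply Finset.sum_congr rfl
        intro j _
        ring
      rw [this, hker ℓ, hkd ℓ]
      ring
    have he0 : e 0 = 0 := by
      simp only [he]
      field_simp
      ring
    have hN : (Matrix.of fun i k : Fin n => g k (χ i.succ)).det ≠ 0 := by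
      apply hCheb (fun i => χ i.succ)
      · intro i j hij
        exact hχ (Fin.succ_lt_succ_iff.mpr hij)
      · intro i; exact hχI _
    have hu : (fun i : Fin n => e i.succ) = 0 := by
      apply vecMul_zero hN
      intro k
      have := heker k
      rw [Fin.sum_univ_succ, he0] at this
      simpa using this
    intro j
    have hej : e j = 0 := by
      rcases Fin.eq_zero_or_eq_succ j with rfl | ⟨i, rfl⟩
      · exact he0
      · exact congrFun hu i
    have := sub_eq_zero.1 (by simpa [he] using hej)
    linarith [this.le, this.ge]
  have hsign : 0 < D 0 * D (Fin.last n) :=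
    cheb_det_sign g hg hCheb (χ ∘ (0 : Fin (n+1)).succAbove)
      (χ ∘ (Fin.last n).succAbove) (hχ.comp (Fin.strictMono_succAbove 0))
      (hχ.comp (Fin.strictMono_succAbove (Fin.last n))) (fun i => hχI _) (fun i => hχI _)
  have hd0' : dd 0 = D 0 := by simp [hdd]
  have hdl' : dd (Fin.last n) = -(D (Fin.last n)) := by
    simp [hdd, Fin.val_last, Odd.neg_one_pow hn]
  have hq : 0 < D (Fin.last n) / D 0 := by
    have h2 : (0:ℝ) < D 0 ^ 2 := pow_two_pos_of_ne_zero (hDne 0)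
    have heq2 : (D 0 * D (Fin.last n)) / D 0 ^ 2 = D (Fin.last n) / D 0 := by
      rw [sq, mul_div_mul_left _ _ (hDne 0)]
    rw [← heq2]
    exact div_pos hsign h2
  have hcl : c (Fin.last n) = (c 0 / dd 0) * dd (Fin.last n) := hrep _
  rw [hd0', hdl'] at hcl
  have heq : (c 0 / D 0) * (-(D (Fin.last n))) = -(c 0 * (D (Fin.last n) / D 0)) := by
    ring
  rw [hcl, heq]
  have := mul_pos hc0 hq
  linarith

/-- enumerate a design with at most `m` points (containing the left endpoint `L`,
which is minimal among the points) by a configuration indexed by `Fin m`. -/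
lemma exists_config {I : Set ℝ} (ξ : Design I) (m : ℕ) (hm0 : NeZero m)
    (hcard : ξ.pts.card ≤ m)
    {L : ℝ} (hLmem : L ∈ ξ.pts) (hmin : ∀ x ∈ ξ.pts, L ≤ x) :
    ∃ p v : Fin m → ℝ, p 0 = L ∧ (∀ j, p j ∈ ξ.pts) ∧ (∀ j, 0 ≤ v j) ∧ (∀ j, v j ≤ 1) ∧
      (∀ g : ℝ → ℝ, ∑ j, v j * g (p j) = ∑ y ∈ ξ.pts, ξ.w y * g y) ∧
      (∀ x ∈ ξ.pts, ∃ j, p j = x ∧ v j = ξ.w x) := by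
  classical
  set c := ξ.pts.card with hc
  set e := ξ.pts.orderIsoOfFin rfl with he
  set P : ℕ → ℝ := fun j => if h : j < c then (e ⟨j, h⟩ : ℝ) else L with hP
  set V : ℕ → ℝ := fun j => if h : j < c then ξ.w (e ⟨j, h⟩ : ℝ) else 0 with hV
  have hc0 : 0 < c := Finset.card_pos.2 ⟨L, hLmem⟩
  have hwle : ∀ x ∈ ξ.pts, ξ.w x ≤ 1 := by
    intro x hx
    rw [← ξ.w_sum]
    exact Finset.single_le_sum (fun y hy => ξ.w_nonneg y hy) hx
  refine ⟨fun j => P j, fun j => V j, ?_, ?_, ?_, ?_, ?_, ?_⟩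
  · show P ((0 : Fin m) : ℕ) = L
    have h0 : ((0 : Fin m) : ℕ) < c := by
      simpa using hc0
    simp only [hP]
    rw [dif_pos h0]
    set i0 := e.symm ⟨L, hLmem⟩ with hi0
    have hL : (e i0 : ℝ) = L := by rw [hi0]; simp
    apply le_antisymm
    · rw [← hL]
      have : (⟨((0:Fin m):ℕ), h0⟩ : Fin c) ≤ i0 := Fin.mk_le_of_le_val (by simp)
      exact_mod_cast e.monotone this
    · exact hmin _ (e ⟨_, h0⟩).2
  · intro j
    show P j ∈ ξ.pts
    simp only [hP]
    by_cases h : (j : ℕ) < c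
    · rw [dif_pos h]; exact (e ⟨_, h⟩).2
    · rw [dif_neg h]; exact hLmem
  · intro j
    show 0 ≤ V j
    simp only [hV]
    by_cases h : (j : ℕ) < c
    · rw [dif_pos h]; exact ξ.w_nonneg _ (e ⟨_, h⟩).2
    · rw [dif_neg h]
  · intro j
    show V j ≤ 1
    simp only [hV]
    by_cases h : (j : ℕ) < c
    · rw [dif_pos h]; exact hwle _ (e ⟨_, h⟩).2
    · rw [dif_neg h]; exact zero_le_one
  · intro g
    have h1 : ∑ j : Fin m, V j * g (P j) = ∑ j ∈ Finset.range m, V j * g (P j) :=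
      Fin.sum_univ_eq_sum_range (fun j => V j * g (P j)) m
    have h2 : ∑ j ∈ Finset.range c, V j * g (P j) = ∑ j ∈ Finset.range m, V j * g (P j) := by
      apply Finset.sum_subset (Finset.range_subset_range.2 hcard)
      intro x _ hx
      rw [Finset.mem_range, not_lt] at hx
      have : V x = 0 := by simp only [hV]; rw [dif_neg (not_lt.2 hx)]
      rw [this, zero_mul]
    have h3 : ∑ j ∈ Finset.range c, V j * g (P j) = ∑ i : Fin c, ξ.w (e i : ℝ) * g (e i : ℝ) := by
      rw [← Fin.sum_univ_eq_sum_range (fun j => V j * g (P j)) c]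
      apply Finset.sum_congr rfl
      intro i _
      have hi : (i : ℕ) < c := i.2
      simp only [hV, hP]
      rw [dif_pos hi, dif_pos hi]
    have h4 : ∑ i : Fin c, ξ.w (e i : ℝ) * g (e i : ℝ) = ∑ y ∈ ξ.pts, ξ.w y * g y := by
      rw [← Finset.sum_coe_sort ξ.pts (fun y => ξ.w y * g y)]
      exact Fintype.sum_equiv e.toEquiv _ _ (fun i => rfl)
    show ∑ j : Fin m, V j * g (P j) = _
    rw [h1, ← h2, h3, h4]
  · intro x hx
    set i0 := e.symm ⟨x, hx⟩ with hi0
    have hi0c : (i0 : ℕ) < c := i0.2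
    refine ⟨⟨i0, lt_of_lt_of_le hi0c hcard⟩, ?_, ?_⟩
    · show P i0 = x
      simp only [hP]
      rw [dif_pos hi0c]
      simp [hi0]
    · show V i0 = ξ.w x
      simp only [hV]
      rw [dif_pos hi0c]
      simp [hi0]

end Stmt7Aux

open Stmt7Aux

/-- relating the optimal design on a subregion `[L,U]` to the unique optimal
design `ξ**` on the full design region `[L,B]`, when the complete class fixes `L`. -/
theorem stmt7 {d m : ℕ} (hd : 1 ≤ d) (hdm : d ≤ m) (L B : ℝ) (hLB : L < B)
    (M : ℝ → Matrix (Fin d) (Fin d) ℝ)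
    (hMpsd : ∀ x ∈ Set.Icc L B, (M x).PosSemidef)
    (hMsmooth : ∀ i j : Fin d, ContDiffOn ℝ 1 (fun x => M x i j) (Set.Icc L B))
    (Ψ : Fin (2 * m - 1) → ℝ → ℝ)
    (hΨ0 : Ψ ⟨0, by omega⟩ = fun _ => 1)
    (hΨsmooth : ∀ ℓ, ContDiffOn ℝ 1 (Ψ ℓ) (Set.Icc L B))
    (hCheb : IsChebyshev Ψ (Set.Icc L B))
    (hCheb' : IsChebyshev
      (fun k : Fin (2 * m - 2) =>
        derivWithin (Ψ ⟨(k : ℕ) + 1, by have := k.isLt; omega⟩) (Set.Icc L B))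
      (Set.Icc L B))
    (hComplete : ∀ ξ : Design (Set.Icc L B), ∃ ξ' : Design (Set.Icc L B),
      ξ'.pts.card ≤ m ∧ L ∈ ξ'.pts ∧
      (∀ ℓ : Fin (2 * m - 1), ∑ y ∈ ξ'.pts, ξ'.w y * Ψ ℓ y = ∑ y ∈ ξ.pts, ξ.w y * Ψ ℓ y) ∧
      (infoMat M ξ' - infoMat M ξ).PosSemidef)
    (Φ : Matrix (Fin d) (Fin d) ℝ → ℝ) (hΦ : IsOptCriterion Φ)
    -- ξ** : the unique Φ-optimal design on the full design region [L,B]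
    (ξstar : Design (Set.Icc L B))
    (hOptFull : ∀ ξ : Design (Set.Icc L B), Φ (infoMat M ξ) ≤ Φ (infoMat M ξstar))
    (hUniqFull : ∀ ξ : Design (Set.Icc L B),
      (∀ η : Design (Set.Icc L B), Φ (infoMat M η) ≤ Φ (infoMat M ξ)) →
      sameMeasure ξ ξstar)
    (hSuppFull : ξstar.supp.card = m)
    (xmax : ℝ) (hxmaxMem : xmax ∈ ξstar.supp) (hxmaxMax : ∀ y ∈ ξstar.supp, y ≤ xmax)
    -- the subregion [L,U] and the unique Φ-optimal design on it
    (U : ℝ) (hU : L < U) (hUB : U ≤ B)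
    (ξU : Design (Set.Icc L U))
    (hOptU : ∀ ξ : Design (Set.Icc L U), Φ (infoMat M ξ) ≤ Φ (infoMat M ξU))
    (hUniqU : ∀ ξ : Design (Set.Icc L U),
      (∀ η : Design (Set.Icc L U), Φ (infoMat M η) ≤ Φ (infoMat M ξ)) →
      sameMeasure ξ ξU)
    (hSuppU : ξU.supp.card = m) :
    (U < xmax → L ∈ ξU.supp ∧ U ∈ ξU.supp) ∧
    (xmax ≤ U → sameMeasure ξU ξstar) := by
  classical
  have hm1 : 1 ≤ m := le_trans hd hdm
  haveI : NeZero m := ⟨by omega⟩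
  have hIccUB : Set.Icc L U ⊆ Set.Icc L B := Set.Icc_subset_Icc (le_refl L) hUB
  -- lift of a design on [L,U] to [L,B]
  set lift : Design (Set.Icc L U) → Design (Set.Icc L B) := fun ξ =>
    ⟨ξ.pts, ξ.w, fun x hx => hIccUB (ξ.mem_pts x hx), ξ.w_nonneg, ξ.w_sum⟩ with hlift
  have hliftinfo : ∀ ξ : Design (Set.Icc L U), infoMat M (lift ξ) = infoMat M ξ :=
    fun ξ => rfl
  have hΨcont : ∀ ℓ, ContinuousOn (Ψ ℓ) (Set.Icc L B) := fun ℓ => (hΨsmooth ℓ).continuousOn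
  -- ################ PART 0: L is a support point of ξU ################
  have hLsupp : L ∈ ξU.supp := by
    by_contra hLs
    obtain ⟨ξ', hcard', hLpts', hmom', hdom'⟩ := hComplete (lift ξU)
    have hmomU : ∀ ℓ : Fin (2*m-1),
        ∑ y ∈ ξ'.pts, ξ'.w y * Ψ ℓ y = ∑ y ∈ ξU.pts, ξU.w y * Ψ ℓ y := hmom'
    set S : Finset ℝ := ξ'.supp ∪ ξU.supp with hS
    have hsuppU_sub : ∀ x ∈ ξU.supp, x ∈ Set.Icc L B :=
      fun x hx => hIccUB (ξU.mem_pts x (supp_subset_pts ξU hx))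
    have hsupp'_sub : ∀ x ∈ ξ'.supp, x ∈ Set.Icc L B :=
      fun x hx => ξ'.mem_pts x (supp_subset_pts ξ' hx)
    have hSsub : ↑S ⊆ Set.Icc L B := by
      intro x hx
      rcases Finset.mem_union.1 (by exact_mod_cast hx) with h | h
      · exact hsupp'_sub x h
      · exact hsuppU_sub x h
    set δ : ℝ → ℝ := fun x => massOf ξ' x - massOf ξU x with hδ
    have hδmom : ∀ ℓ, ∑ x ∈ S, δ x * Ψ ℓ x = 0 := by
      intro ℓ
      have h1 : ∑ x ∈ S, massOf ξ' x * Ψ ℓ x = ∑ y ∈ ξ'.pts, ξ'.w y * Ψ ℓ y :=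
        sum_massOf_mul ξ' Finset.subset_union_left _
      have h2 : ∑ x ∈ S, massOf ξU x * Ψ ℓ x = ∑ y ∈ ξU.pts, ξU.w y * Ψ ℓ y :=
        sum_massOf_mul ξU Finset.subset_union_right _
      have : ∑ x ∈ S, δ x * Ψ ℓ x
          = ∑ x ∈ S, massOf ξ' x * Ψ ℓ x - ∑ x ∈ S, massOf ξU x * Ψ ℓ x := by
        rw [← Finset.sum_sub_distrib]
        exact Finset.sum_congr rfl fun x _ => by rw [hδ]; ring
      rw [this, h1, h2, hmomU ℓ, sub_self]
    have hcs' : ξ'.supp.card ≤ m := le_trans (Finset.card_le_card (supp_subset_pts ξ')) hcard'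
    by_cases hbig : S.card ≤ 2*m-1
    · -- few combined points : the two measures coincide, contradiction
      have hz := cheb_indep hLB Ψ hCheb S hSsub hbig δ hδmom
      have hmass : ∀ x, massOf ξ' x = massOf ξU x := by
        intro x
        by_cases hx : x ∈ S
        · have h0 : massOf ξ' x - massOf ξU x = 0 := hz x hx
          linarith
        · rw [massOf_eq_zero ξ' (fun h => hx (Finset.mem_union_left _ h)),
            massOf_eq_zero ξU (fun h => hx (Finset.mem_union_right _ h))]
      have hL' : L ∉ ξ'.supp := by
        intro h
        have h1 : 0 < massOf ξ' L := (massOf_pos_iff ξ' L).2 h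
        rw [hmass L, massOf_eq_zero ξU hLs] at h1
        exact lt_irrefl 0 h1
      have hsub2 : ξU.supp ⊆ ξ'.supp := by
        intro a ha
        apply (massOf_pos_iff ξ' a).1
        rw [hmass a]
        exact (massOf_pos_iff ξU a).2 ha
      have herase : ξ'.supp ⊆ ξ'.pts.erase L := by
        intro a ha
        exact Finset.mem_erase.2 ⟨fun h => hL' (h ▸ ha), supp_subset_pts ξ' ha⟩
      have hcard1 : ξU.supp.card ≤ (ξ'.pts.erase L).card :=
        Finset.card_le_card (hsub2.trans herase)
      rw [Finset.card_erase_of_mem hLpts', hSuppU] at hcard1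
      omega
    · -- 2m combined points: interlacing forces all points of ξ' below U
      have h1 : S.card ≤ ξ'.supp.card + ξU.supp.card := Finset.card_union_le _ _
      have hcS : S.card = 2*m := by
        rw [hSuppU] at h1
        omega
      have hsupp'm : ξ'.supp.card = m := by
        omega
      have hsuppeq : ξ'.supp = ξ'.pts := by
        apply Finset.eq_of_subset_of_card_le (supp_subset_pts ξ')
        rw [hsupp'm]
        exact hcard'
      have hLsupp' : L ∈ ξ'.supp := hsuppeq ▸ hLpts'
      have hdisj : Disjoint ξ'.supp ξU.supp :=
        Finset.card_union_eq_card_add_card.1 (by rw [← hS, hcS, hsupp'm, hSuppU]; omega)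
      have hLnotU : L ∉ ξU.supp := hLs
      have hcS' : S.card = (2*m-1)+1 := by omega
      set χe := S.orderIsoOfFin hcS' with hχe
      set χ : Fin ((2*m-1)+1) → ℝ := fun j => (χe j : ℝ) with hχ
      have hχmono : StrictMono χ := fun i j hij => by
        exact_mod_cast (χe.lt_iff_lt.2 hij)
      have hχI : ∀ j, χ j ∈ Set.Icc L B := fun j => hSsub (χe j).2
      have hχmemS : ∀ j, χ j ∈ S := fun j => (χe j).2
      have hχ0 : χ 0 = L := by
        have hLS : L ∈ S := Finset.mem_union_left _ hLsupp'
        obtain ⟨j0, hj0⟩ := χe.surjective ⟨L, hLS⟩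
        apply le_antisymm
        · have h1 : (0 : Fin ((2*m-1)+1)) ≤ j0 := Fin.zero_le j0
          have := χe.monotone h1
          calc χ 0 = (χe 0 : ℝ) := rfl
            _ ≤ (χe j0 : ℝ) := by exact_mod_cast this
            _ = L := by rw [hj0]
        · exact (hχI 0).1
      set c : Fin ((2*m-1)+1) → ℝ := fun j => δ (χ j) with hcdef
      have hker : ∀ ℓ : Fin (2*m-1), ∑ j : Fin ((2*m-1)+1), c j * Ψ ℓ (χ j) = 0 := by
        intro ℓ
        rw [← hδmom ℓ, ← Finset.sum_coe_sort S (fun x => δ x * Ψ ℓ x)]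
        exact Fintype.sum_equiv χe.toEquiv (fun j => c j * Ψ ℓ (χ j))
          (fun x => δ x * Ψ ℓ x) (fun j => rfl)
      have hc0 : 0 < c 0 := by
        have h1 : massOf ξU L = 0 := massOf_eq_zero ξU hLnotU
        have h2 : 0 < massOf ξ' L := (massOf_pos_iff ξ' L).2 hLsupp'
        show 0 < δ (χ 0)
        rw [hχ0]
        show 0 < massOf ξ' L - massOf ξU L
        rw [h1]
        linarith
      have hodd : Odd (2*m-1) := Nat.odd_iff.2 (by omega)
      have hlast := cheb_last_neg hodd Ψ hΨcont hCheb χ hχmono hχI c hker hc0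
      set xl := χ (Fin.last (2*m-1)) with hxl
      have hxlU : xl ∈ ξU.supp := by
        have h1 : massOf ξ' xl - massOf ξU xl < 0 := hlast
        have h2 := massOf_nonneg ξ' xl
        have : 0 < massOf ξU xl := by linarith
        exact (massOf_pos_iff ξU xl).1 this
      have hxlleU : xl ≤ U := (ξU.mem_pts xl (supp_subset_pts ξU hxlU)).2
      have hmaxS : ∀ y ∈ S, y ≤ xl := by
        intro y hy
        obtain ⟨j, hj⟩ := χe.surjective ⟨y, hy⟩
        have h1 : j ≤ Fin.last (2*m-1) := Fin.le_last j
        have := χe.monotone h1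
        calc y = (χe j : ℝ) := by rw [hj]
          _ ≤ (χe (Fin.last (2*m-1)) : ℝ) := by exact_mod_cast this
          _ = xl := rfl
      set η := restrictTo ξ' (Set.Icc L U)
        (fun x hx => ⟨(ξ'.mem_pts x (supp_subset_pts ξ' hx)).1,
          le_trans (hmaxS x (Finset.mem_union_left _ hx)) hxlleU⟩) with hη
      have hηinfo : infoMat M η = infoMat M ξ' := restrictTo_infoMat ξ' _ _ M
      have hψdom : Φ (infoMat M (lift ξU)) ≤ Φ (infoMat M ξ') :=
        hΦ.isotonic _ _ (infoMat_posSemidef (lift ξU) M hMpsd) hdom'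
      have hηopt : ∀ ζ : Design (Set.Icc L U), Φ (infoMat M ζ) ≤ Φ (infoMat M η) := by
        intro ζ
        calc Φ (infoMat M ζ) ≤ Φ (infoMat M ξU) := hOptU ζ
          _ = Φ (infoMat M (lift ξU)) := by rw [hliftinfo]
          _ ≤ Φ (infoMat M ξ') := hψdom
          _ = Φ (infoMat M η) := by rw [hηinfo]
      have hsm := hUniqU η hηopt
      have := sameMeasure_massOf hsm L
      have hηL : 0 < massOf η L := by
        apply (massOf_pos_iff η L).2
        apply (mem_supp_iff η L).2
        constructor
        · exact hLsupp'
        · show 0 < ξ'.w L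
          exact ((mem_supp_iff ξ' L).1 hLsupp').2
      rw [this, massOf_eq_zero ξU hLnotU] at hηL
      exact lt_irrefl 0 hηL
  -- ################ PART 2: if xmax ≤ U then ξU = ξstar ################
  have hpart2 : xmax ≤ U → sameMeasure ξU ξstar := by
    intro hxU
    set ξS := restrictTo ξstar (Set.Icc L U)
      (fun x hx => ⟨(ξstar.mem_pts x (supp_subset_pts ξstar hx)).1,
        le_trans (hxmaxMax x hx) hxU⟩) with hξS
    have hSinfo : infoMat M ξS = infoMat M ξstar := restrictTo_infoMat ξstar _ _ M
    have hopt : ∀ η : Design (Set.Icc L U), Φ (infoMat M η) ≤ Φ (infoMat M ξS) := by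
      intro η
      calc Φ (infoMat M η) = Φ (infoMat M (lift η)) := by rw [hliftinfo]
        _ ≤ Φ (infoMat M ξstar) := hOptFull (lift η)
        _ = Φ (infoMat M ξS) := by rw [hSinfo]
    have hsm := hUniqU ξS hopt
    intro g
    exact (hsm g).symm.trans (restrictTo_sameMeasure ξstar _ _ g)
  -- ################ PART 1: if U < xmax then U is a support point ################
  have hpart1 : U < xmax → U ∈ ξU.supp := by
    intro hUx
    by_contra hUs
    have hAltU : ∀ a ∈ ξU.supp, a < U := by
      intro a ha
      have h1 : a ≤ U := (ξU.mem_pts a (supp_subset_pts ξU ha)).2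
      exact lt_of_le_of_ne h1 (fun h => hUs (h ▸ ha))
    -- strict optimality gap
    have hgap : Φ (infoMat M ξU) < Φ (infoMat M ξstar) := by
      have hle : Φ (infoMat M ξU) ≤ Φ (infoMat M ξstar) := by
        rw [← hliftinfo ξU]
        exact hOptFull (lift ξU)
      rcases lt_or_eq_of_le hle with h | heq
      · exact h
      · exfalso
        have hsm := hUniqFull (lift ξU) (fun η => by
          rw [hliftinfo ξU]
          exact (hOptFull η).trans heq.ge)
        have hmx := sameMeasure_massOf hsm xmax
        have h1 : 0 < massOf ξstar xmax := (massOf_pos_iff ξstar xmax).2 hxmaxMem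
        rw [← hmx] at h1
        have h2 : xmax ∈ (lift ξU).supp := (massOf_pos_iff (lift ξU) xmax).1 h1
        have h3 : xmax ∈ ξU.pts := supp_subset_pts (lift ξU) h2
        have := (ξU.mem_pts xmax h3).2
        linarith
    -- mixtures along t k
    set t : ℕ → ℝ := fun k => ((k:ℝ)+2)⁻¹ with htdef
    have ht0 : ∀ k, 0 < t k := fun k => by positivity
    have ht1 : ∀ k, t k < 1 := by
      intro k
      rw [htdef]
      rw [inv_lt_one_iff₀]
      right
      have : (0:ℝ) ≤ (k:ℝ) := Nat.cast_nonneg k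
      linarith
    have htlim : Filter.Tendsto t Filter.atTop (nhds 0) := by
      apply Filter.Tendsto.inv_tendsto_atTop
      apply Filter.tendsto_atTop_add_const_right
      exact tendsto_natCast_atTop_atTop
    set ζ : ℕ → Design (Set.Icc L B) := fun k =>
      { pts := ξU.pts ∪ ξstar.pts
        w := fun x => t k * massOf ξstar x + (1 - t k) * massOf ξU x
        mem_pts := by
          intro x hx
          rcases Finset.mem_union.1 hx with h | h
          · exact hIccUB (ξU.mem_pts x h)
          · exact ξstar.mem_pts x h
        w_nonneg := by
          intro x _
          show 0 ≤ t k * massOf ξstar x + (1 - t k) * massOf ξU x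
          have := massOf_nonneg ξstar x
          have := massOf_nonneg ξU x
          have := (ht0 k).le
          have := (ht1 k).le
          nlinarith
        w_sum := by
          rw [Finset.sum_congr rfl (fun x _ => rfl)]
          rw [Finset.sum_add_distrib, ← Finset.mul_sum, ← Finset.mul_sum]
          rw [sum_massOf ξstar ((supp_subset_pts ξstar).trans Finset.subset_union_right),
            sum_massOf ξU ((supp_subset_pts ξU).trans Finset.subset_union_left)]
          ring } with hζdef
    have hζinfo : ∀ k, infoMat M (ζ k)
        = t k • infoMat M ξstar + (1 - t k) • infoMat M ξU := by
      intro k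
      show ∑ x ∈ ξU.pts ∪ ξstar.pts,
          (t k * massOf ξstar x + (1 - t k) * massOf ξU x) • M x = _
      rw [Finset.sum_congr rfl
        (fun x _ => add_smul (t k * massOf ξstar x) ((1 - t k) * massOf ξU x) (M x))]
      rw [Finset.sum_add_distrib]
      rw [Finset.sum_congr rfl (fun x _ => mul_smul (t k) (massOf ξstar x) (M x)),
        ← Finset.smul_sum]
      conv_lhs => rw [Finset.sum_congr rfl
          (fun x (_ : x ∈ ξU.pts ∪ ξstar.pts) => mul_smul (1 - t k) (massOf ξU x) (M x))]
      rw [← Finset.smul_sum]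
      rw [sum_massOf_smul ξstar ((supp_subset_pts ξstar).trans Finset.subset_union_right) M,
        sum_massOf_smul ξU ((supp_subset_pts ξU).trans Finset.subset_union_left) M]
      rfl
    have hζmom : ∀ k (ℓ : Fin (2*m-1)), ∑ y ∈ (ζ k).pts, (ζ k).w y * Ψ ℓ y
        = t k * (∑ y ∈ ξstar.pts, ξstar.w y * Ψ ℓ y)
          + (1 - t k) * (∑ y ∈ ξU.pts, ξU.w y * Ψ ℓ y) := by
      intro k ℓ
      show ∑ y ∈ ξU.pts ∪ ξstar.pts,
          (t k * massOf ξstar y + (1 - t k) * massOf ξU y) * Ψ ℓ y = _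
      rw [Finset.sum_congr rfl (fun x _ => by ring_nf :
        ∀ x ∈ ξU.pts ∪ ξstar.pts, (t k * massOf ξstar x + (1 - t k) * massOf ξU x) * Ψ ℓ x
          = t k * (massOf ξstar x * Ψ ℓ x) + (1 - t k) * (massOf ξU x * Ψ ℓ x))]
      rw [Finset.sum_add_distrib, ← Finset.mul_sum, ← Finset.mul_sum]
      rw [sum_massOf_mul ξstar ((supp_subset_pts ξstar).trans Finset.subset_union_right),
        sum_massOf_mul ξU ((supp_subset_pts ξU).trans Finset.subset_union_left)]
    have hζΦ : ∀ k, Φ (infoMat M ξU) < Φ (infoMat M (ζ k)) := by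
      intro k
      have hconc := hΦ.concave (infoMat M ξstar) (infoMat M ξU)
        (infoMat_posSemidef ξstar M hMpsd)
        (infoMat_posSemidef ξU M (fun x hx => hMpsd x (hIccUB hx)))
        (t k) (ht0 k) (ht1 k)
      rw [← hζinfo k] at hconc
      nlinarith [ht0 k, hgap]
    -- apply the complete class theorem to each mixture
    have hex : ∀ k, ∃ ξ' : Design (Set.Icc L B),
        ξ'.pts.card ≤ m ∧ L ∈ ξ'.pts ∧
        (∀ ℓ : Fin (2*m-1), ∑ y ∈ ξ'.pts, ξ'.w y * Ψ ℓ y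
          = ∑ y ∈ (ζ k).pts, (ζ k).w y * Ψ ℓ y) ∧
        (infoMat M ξ' - infoMat M (ζ k)).PosSemidef := fun k => hComplete (ζ k)
    choose ξ' hcard' hLpts' hmom' hdom' using hex
    have hΦ' : ∀ k, Φ (infoMat M ξU) < Φ (infoMat M (ξ' k)) := by
      intro k
      calc Φ (infoMat M ξU) < Φ (infoMat M (ζ k)) := hζΦ k
        _ ≤ Φ (infoMat M (ξ' k)) :=
          hΦ.isotonic _ _ (infoMat_posSemidef (ζ k) M hMpsd) (hdom' k)
    -- if some ξ' k lives on [L,U], contradiction with optimality of ξU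
    by_cases hgood : ∃ k, ∀ x ∈ (ξ' k).supp, x ≤ U
    · obtain ⟨k, hk⟩ := hgood
      set η := restrictTo (ξ' k) (Set.Icc L U)
        (fun x hx => ⟨((ξ' k).mem_pts x (supp_subset_pts (ξ' k) hx)).1, hk x hx⟩) with hη
      have h1 : infoMat M η = infoMat M (ξ' k) := restrictTo_infoMat (ξ' k) _ _ M
      have h2 := hOptU η
      rw [h1] at h2
      exact absurd h2 (not_le.2 (hΦ' k))
    · push_neg at hgood
      -- configurations
      have hminL : ∀ k, ∀ x ∈ (ξ' k).pts, L ≤ x :=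
        fun k x hx => ((ξ' k).mem_pts x hx).1
      have hconf : ∀ k, ∃ p v : Fin m → ℝ, p 0 = L ∧ (∀ j, p j ∈ (ξ' k).pts) ∧
          (∀ j, 0 ≤ v j) ∧ (∀ j, v j ≤ 1) ∧
          (∀ g : ℝ → ℝ, ∑ j, v j * g (p j) = ∑ y ∈ (ξ' k).pts, (ξ' k).w y * g y) ∧
          (∀ x ∈ (ξ' k).pts, ∃ j, p j = x ∧ v j = (ξ' k).w x) :=
        fun k => exists_config (ξ' k) m ‹_› (hcard' k) (hLpts' k) (hminL k)
      choose p v hp0 hppts hv0 hv1 hsum hslot using hconf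
      -- escaping slots
      have hesc : ∀ k, ∃ j : Fin m, U < p k j ∧ 0 < v k j := by
        intro k
        obtain ⟨x, hxsupp, hxU⟩ := hgood k
        obtain ⟨j, hj1, hj2⟩ := hslot k x (supp_subset_pts (ξ' k) hxsupp)
        refine ⟨j, ?_, ?_⟩
        · rw [hj1]; exact hxU
        · rw [hj2]; exact ((mem_supp_iff (ξ' k) x).1 hxsupp).2
      choose jesc hjesc1 hjesc2 using hesc
      -- pigeonhole: fix the escaping slot
      have hpig : ∃ i : Fin m, {k : ℕ | jesc k = i}.Infinite := by
        by_contra h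
        push_neg at h
        have : (Set.univ : Set ℕ).Finite := by
          have hcover : (Set.univ : Set ℕ) ⊆ ⋃ i : Fin m, {k : ℕ | jesc k = i} := by
            intro k _
            exact Set.mem_iUnion.2 ⟨jesc k, rfl⟩
          exact Set.Finite.subset (Set.finite_iUnion h) hcover
        exact Set.infinite_univ this
      obtain ⟨i, hinf⟩ := hpig
      have hfreq : ∃ᶠ k in Filter.atTop, jesc k = i :=
        Nat.frequently_atTop_iff_infinite.2 hinf
      obtain ⟨φ0, hφ0mono, hφ0⟩ := Filter.extraction_of_frequently_atTop hfreq
      -- compactness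
      set z : ℕ → (Fin m → ℝ × ℝ) := fun k j => (p k j, v k j) with hz
      set K : Set (Fin m → ℝ × ℝ) :=
        Set.pi Set.univ (fun _ : Fin m => (Set.Icc L B) ×ˢ (Set.Icc (0:ℝ) 1)) with hK
      have hKcomp : IsCompact K :=
        isCompact_univ_pi (fun _ => (isCompact_Icc).prod isCompact_Icc)
      have hzK : ∀ k, z k ∈ K := by
        intro k
        intro j _
        constructor
        · exact (ξ' k).mem_pts _ (hppts k j)
        · exact ⟨hv0 k j, hv1 k j⟩
      obtain ⟨zs, hzsK, φ1, hφ1mono, hzconv⟩ :=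
        hKcomp.tendsto_subseq (fun n => hzK (φ0 n))
      set φ : ℕ → ℕ := φ0 ∘ φ1 with hφ
      have hφmono : StrictMono φ := hφ0mono.comp hφ1mono
      have hφesc : ∀ n, jesc (φ n) = i := fun n => hφ0 (φ1 n)
      set pst : Fin m → ℝ := fun j => (zs j).1 with hpst
      set vst : Fin m → ℝ := fun j => (zs j).2 with hvst
      have hcomp : ∀ j, Filter.Tendsto (fun n => p (φ n) j) Filter.atTop (nhds (pst j))
          ∧ Filter.Tendsto (fun n => v (φ n) j) Filter.atTop (nhds (vst j)) := by
        intro j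
        have hj := tendsto_pi_nhds.1 hzconv j
        constructor
        · exact ((continuous_fst.tendsto (zs j)).comp hj)
        · exact ((continuous_snd.tendsto (zs j)).comp hj)
      have hpstI : ∀ j, pst j ∈ Set.Icc L B := fun j => (hzsK j (Set.mem_univ j)).1
      have hvst0 : ∀ j, 0 ≤ vst j := fun j => (hzsK j (Set.mem_univ j)).2.1
      have hpst0 : pst 0 = L := by
        have h1 := (hcomp 0).1
        have h2 : Filter.Tendsto (fun n => p (φ n) (0 : Fin m)) Filter.atTop (nhds L) := by
          have : (fun n => p (φ n) (0 : Fin m)) = fun _ => L := funext fun n => hp0 (φ n)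
          rw [this]
          exact tendsto_const_nhds
        exact tendsto_nhds_unique h1 h2
      have hpsti : U ≤ pst i := by
        apply ge_of_tendsto (hcomp i).1
        apply Filter.Eventually.of_forall
        intro n
        have := hjesc1 (φ n)
        rw [hφesc n] at this
        exact this.le
      -- limit moments
      have htφ : Filter.Tendsto (fun n => t (φ n)) Filter.atTop (nhds 0) :=
        htlim.comp hφmono.tendsto_atTop
      have hmomlim : ∀ ℓ : Fin (2*m-1),
          ∑ j, vst j * Ψ ℓ (pst j) = ∑ y ∈ ξU.pts, ξU.w y * Ψ ℓ y := by
        intro ℓ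
        have hLHS : Filter.Tendsto (fun n => ∑ j, v (φ n) j * Ψ ℓ (p (φ n) j))
            Filter.atTop (nhds (∑ j, vst j * Ψ ℓ (pst j))) := by
          apply tendsto_finset_sum
          intro j _
          apply Filter.Tendsto.mul (hcomp j).2
          have hwithin : Filter.Tendsto (fun n => p (φ n) j) Filter.atTop
              (nhdsWithin (pst j) (Set.Icc L B)) := by
            apply tendsto_nhdsWithin_of_tendsto_nhds_of_eventually_within _ (hcomp j).1
            exact Filter.Eventually.of_forall (fun n => (ξ' (φ n)).mem_pts _ (hppts (φ n) j))
          exact ((hΨcont ℓ (pst j) (hpstI j)).tendsto).comp hwithin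
        have heqn : ∀ n, ∑ j, v (φ n) j * Ψ ℓ (p (φ n) j)
            = t (φ n) * (∑ y ∈ ξstar.pts, ξstar.w y * Ψ ℓ y)
              + (1 - t (φ n)) * (∑ y ∈ ξU.pts, ξU.w y * Ψ ℓ y) := by
          intro n
          rw [hsum (φ n) (Ψ ℓ), hmom' (φ n) ℓ, hζmom (φ n) ℓ]
        have hRHS : Filter.Tendsto (fun n => ∑ j, v (φ n) j * Ψ ℓ (p (φ n) j))
            Filter.atTop (nhds (∑ y ∈ ξU.pts, ξU.w y * Ψ ℓ y)) := by
          rw [funext heqn]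
          have h1 : Filter.Tendsto
              (fun n => t (φ n) * (∑ y ∈ ξstar.pts, ξstar.w y * Ψ ℓ y)
                + (1 - t (φ n)) * (∑ y ∈ ξU.pts, ξU.w y * Ψ ℓ y)) Filter.atTop
              (nhds (0 * (∑ y ∈ ξstar.pts, ξstar.w y * Ψ ℓ y)
                + (1 - 0) * (∑ y ∈ ξU.pts, ξU.w y * Ψ ℓ y))) := by
            apply Filter.Tendsto.add
            · exact htφ.mul_const _
            · exact ((tendsto_const_nhds.sub htφ).mul_const _)
          simpa using h1
        exact tendsto_nhds_unique hLHS hRHS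
      -- the limit measure, with at most m points among which L, equals ξU
      set Astar : Finset ℝ := (Finset.univ.filter (fun j => 0 < vst j)).image pst with hAstar
      set S2 : Finset ℝ := ξU.supp ∪ Astar with hS2
      have hS2sub : ↑S2 ⊆ Set.Icc L B := by
        intro x hx
        rcases Finset.mem_union.1 (by exact_mod_cast hx) with h | h
        · exact hIccUB (ξU.mem_pts x (supp_subset_pts ξU h))
        · obtain ⟨j, _, hj⟩ := Finset.mem_image.1 h
          exact hj ▸ hpstI j
      have hS2card : S2.card ≤ 2*m-1 := by
        have h1 : S2 = ξU.supp ∪ (Astar \ ξU.supp) := by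
          rw [Finset.union_sdiff_self_eq_union]
        have h2 : Astar \ ξU.supp ⊆ Astar.erase L := by
          intro x hx
          rcases Finset.mem_sdiff.1 hx with ⟨hx1, hx2⟩
          exact Finset.mem_erase.2 ⟨fun h => hx2 (h ▸ hLsupp), hx1⟩
        have h3 : Astar.erase L ⊆ (Finset.univ.erase (0 : Fin m)).image pst := by
          intro x hx
          rcases Finset.mem_erase.1 hx with ⟨hxne, hxA⟩
          obtain ⟨j, _, hj⟩ := Finset.mem_image.1 hxA
          apply Finset.mem_image.2
          refine ⟨j, ?_, hj⟩
          apply Finset.mem_erase.2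
          refine ⟨?_, Finset.mem_univ j⟩
          intro hj0
          apply hxne
          rw [← hj, hj0, hpst0]
        have h4 : ((Finset.univ.erase (0 : Fin m)).image pst).card ≤ m - 1 := by
          calc ((Finset.univ.erase (0 : Fin m)).image pst).card
              ≤ (Finset.univ.erase (0 : Fin m)).card := Finset.card_image_le
            _ = m - 1 := by
              rw [Finset.card_erase_of_mem (Finset.mem_univ _), Finset.card_univ,
                Fintype.card_fin]
        have h5 : (Astar \ ξU.supp).card ≤ m - 1 :=
          le_trans (Finset.card_le_card (h2.trans h3)) h4
        have h6 : S2.card ≤ ξU.supp.card + (Astar \ ξU.supp).card := by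
          rw [h1]
          exact Finset.card_union_le _ _
        rw [hSuppU] at h6
        omega
      set vmass : ℝ → ℝ := fun x => ∑ j ∈ Finset.univ.filter (fun j => pst j = x), vst j
        with hvmass
      set δ2 : ℝ → ℝ := fun x => vmass x - massOf ξU x with hδ2
      have hvz : ∀ j : Fin m, pst j ∉ S2 → vst j = 0 := by
        intro j hj
        by_contra h0
        have : 0 < vst j := lt_of_le_of_ne (hvst0 j) (Ne.symm h0)
        apply hj
        apply Finset.mem_union_right
        exact Finset.mem_image.2 ⟨j, Finset.mem_filter.2 ⟨Finset.mem_univ j, this⟩, rfl⟩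
      have hfib : ∀ ℓ : Fin (2*m-1),
          ∑ x ∈ S2, vmass x * Ψ ℓ x = ∑ j, vst j * Ψ ℓ (pst j) := by
        intro ℓ
        set s0 : Finset (Fin m) := Finset.univ.filter (fun j => pst j ∈ S2) with hs0
        have hmaps : ∀ j ∈ s0, pst j ∈ S2 := fun j hj => (Finset.mem_filter.1 hj).2
        have hfw := Finset.sum_fiberwise_of_maps_to hmaps (fun j => vst j * Ψ ℓ (pst j))
        have hinner : ∀ x ∈ S2, ∑ j ∈ s0.filter (fun j => pst j = x), vst j * Ψ ℓ (pst j)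
            = vmass x * Ψ ℓ x := by
          intro x hxS
          have hfl : s0.filter (fun j => pst j = x)
              = Finset.univ.filter (fun j => pst j = x) := by
            ext j
            simp only [hs0, Finset.mem_filter, Finset.mem_univ, true_and]
            constructor
            · rintro ⟨_, h⟩; exact h
            · intro h; exact ⟨h ▸ hxS, h⟩
          rw [hfl]
          rw [Finset.sum_congr rfl (fun j hj => by
            rw [(Finset.mem_filter.1 hj).2])]
          rw [← Finset.sum_mul]
        have houter : ∑ j ∈ s0, vst j * Ψ ℓ (pst j) = ∑ j, vst j * Ψ ℓ (pst j) := by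
          apply Finset.sum_subset (Finset.filter_subset _ _)
          intro j _ hj
          have : pst j ∉ S2 := by
            intro h
            exact hj (Finset.mem_filter.2 ⟨Finset.mem_univ j, h⟩)
          rw [hvz j this, zero_mul]
        rw [← houter, ← hfw]
        exact Finset.sum_congr rfl (fun x hx => (hinner x hx).symm)
      have hδ2mom : ∀ ℓ, ∑ x ∈ S2, δ2 x * Ψ ℓ x = 0 := by
        intro ℓ
        have h1 : ∑ x ∈ S2, δ2 x * Ψ ℓ x
            = ∑ x ∈ S2, vmass x * Ψ ℓ x - ∑ x ∈ S2, massOf ξU x * Ψ ℓ x := by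
          rw [← Finset.sum_sub_distrib]
          exact Finset.sum_congr rfl fun x _ => by rw [hδ2]; ring
        rw [h1, hfib ℓ, hmomlim ℓ,
          sum_massOf_mul ξU Finset.subset_union_left (Ψ ℓ), sub_self]
      have hz2 := cheb_indep hLB Ψ hCheb S2 hS2sub hS2card δ2 hδ2mom
      -- every atom of ξU is hit by some slot with positive limit weight
      have hhit : ∀ a ∈ ξU.supp, ∃ j : Fin m, pst j = a ∧ 0 < vst j := by
        intro a ha
        have haS : a ∈ S2 := Finset.mem_union_left _ ha
        have h1 : vmass a - massOf ξU a = 0 := hz2 a haS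
        have h2 : vmass a = massOf ξU a := by linarith
        have h3 : 0 < vmass a := by
          rw [h2]
          exact (massOf_pos_iff ξU a).2 ha
        by_contra hno
        push_neg at hno
        have : vmass a = 0 := by
          apply Finset.sum_eq_zero
          intro j hj
          have hpj := (Finset.mem_filter.1 hj).2
          have := hno j hpj
          linarith [hvst0 j]
        rw [this] at h3
        exact lt_irrefl 0 h3
      -- build an injection from the m atoms into the m slots; slot i is hit too
      have hchoose : ∀ a : {x // x ∈ ξU.supp}, ∃ j : Fin m, pst j = a.1 ∧ 0 < vst j :=
        fun a => hhit a.1 a.2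
      choose f hf1 hf2 using hchoose
      have hfinj : Function.Injective f := by
        intro a b hab
        apply Subtype.ext
        rw [← hf1 a, ← hf1 b, hab]
      have himg : Finset.univ.image f = (Finset.univ : Finset (Fin m)) := by
        apply Finset.eq_univ_of_card
        rw [Finset.card_image_of_injective _ hfinj, Finset.card_univ]
        rw [Fintype.card_coe, hSuppU, Fintype.card_fin]
      have hi_mem : i ∈ Finset.univ.image f := by rw [himg]; exact Finset.mem_univ i
      obtain ⟨a, _, hai⟩ := Finset.mem_image.1 hi_mem
      have h1 : pst i = a.1 := by rw [← hai]; exact hf1 a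
      have h2 : (a : ℝ) < U := hAltU a.1 a.2
      rw [h1] at hpsti
      linarith
  exact ⟨fun hUx => ⟨hLsupp, hpart1 hUx⟩, hpart2⟩
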